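/- For every n ≥ 7 there exist a 2-regular bipartite graph G and a 1-regular bipartite graph H on a common bipartition (A,B) with |A|=|B|=n and E(G)∩E(H)=∅, such that no perfect matching in G is acceptable for H. -/

import Mathlib

/-- A bipartite graph on parts `A` and `B`, each a copy of `Fin n`, is modelled by the
relation `E : Fin n → Fin n → Prop` recording which pairs `(a, b)` with `a ∈ A`, `b ∈ B`
are joined by an edge.  `BipRegular n s E` says that this bipartite graph is `s`-regular:
every vertex of `A` and every vertex of `B` is incident with exactly `s` edges. -/
def BipRegular (n s : ℕ) (E : Fin n → Fin n → Prop) : Prop :=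
  (∀ a : Fin n, {b : Fin n | E a b}.ncard = s) ∧
  (∀ b : Fin n, {a : Fin n | E a b}.ncard = s)

/-- A perfect matching in the bipartite graph `G` (given by the bijection `σ : A ≃ B`,
i.e. the matching consists of the edges `(a, σ a)`) is *acceptable* for the bipartite
graph `H` if no two of its edges form a 4-cycle together with two edges of `H`:
there are no `a ≠ a'` with `(a, σ a')` and `(a', σ a)` both edges of `H`. -/
def AcceptableMatching (n : ℕ) (G H : Fin n → Fin n → Prop) (σ : Fin n ≃ Fin n) : Prop :=
  (∀ a : Fin n, G a (σ a)) ∧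
  ∀ a a' : Fin n, a ≠ a' → ¬ (H a (σ a') ∧ H a' (σ a))


def gfun (n : ℕ) : ℕ → ℕ := fun x =>
  if x = 0 then 2 else if x = 2 then 0 else if x = 3 then n-1
  else if x = n-1 then 3 else if x = n-2 then 1 else if x = 1 then 4 else x+1

lemma gfun_lt (n : ℕ) [NeZero n] (hn : 7 ≤ n) : ∀ x < n, gfun n x < n := by
  intro x hx; simp only [gfun]; split_ifs <;> omega

lemma gfun_inj (n : ℕ) [NeZero n] (hn : 7 ≤ n) : ∀ x < n, ∀ y < n, gfun n x = gfun n y → x = y := by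
  intro x hx y hy h; simp only [gfun] at h; split_ifs at h <;> omega

lemma gfun_ne (n : ℕ) [NeZero n] (hn : 7 ≤ n) : ∀ x < n, gfun n x ≠ x := by
  intro x hx; simp only [gfun]; split_ifs <;> omega

lemma gfun_mod (n : ℕ) [NeZero n] (hn : 7 ≤ n) : ∀ x < n, (gfun n x + 1) % n ≠ x := by
  intro x hx
  rcases Nat.lt_or_ge (gfun n x + 1) n with h | h
  · rw [Nat.mod_eq_of_lt h]; simp only [gfun] at h ⊢; split_ifs at h ⊢ <;> omega
  · have h' : gfun n x + 1 = n := by have := gfun_lt n hn x hx; omega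
    rw [h', Nat.mod_self]; simp only [gfun] at h' ⊢; split_ifs at h' ⊢ <;> omega

def ffun (n : ℕ) [NeZero n] (hn : 7 ≤ n) (a : Fin n) : Fin n := ⟨gfun n a.val, gfun_lt n hn _ a.isLt⟩

lemma ffun_inj (n : ℕ) [NeZero n] (hn : 7 ≤ n) : Function.Injective (ffun n hn) := by
  intro a b h
  exact Fin.ext (gfun_inj n hn _ a.isLt _ b.isLt (congrArg Fin.val h))

lemma ffun_bij (n : ℕ) [NeZero n] (hn : 7 ≤ n) : Function.Bijective (ffun n hn) :=
  Finite.injective_iff_bijective.mp (ffun_inj n hn)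

lemma fin_val_one (n : ℕ) [NeZero n] (hn : 7 ≤ n) : ((1 : Fin n).val : ℕ) = 1 := by
  rw [Fin.val_one', Nat.mod_eq_of_lt (by omega)]

lemma fin_one_ne_zero (n : ℕ) [NeZero n] (hn : 7 ≤ n) : (1 : Fin n) ≠ 0 := by
  intro h; rw [Fin.ext_iff, fin_val_one n hn] at h
  exact one_ne_zero h

lemma fin_add_one_val (n : ℕ) [NeZero n] (hn : 7 ≤ n) (a : Fin n) : (a + 1).val = (a.val + 1) % n := by
  rw [Fin.add_def, fin_val_one n hn]

lemma ffun_ne (n : ℕ) [NeZero n] (hn : 7 ≤ n) (a : Fin n) : ffun n hn a ≠ a := by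
  intro h; exact gfun_ne n hn _ a.isLt (congrArg Fin.val h)

lemma ffun_ne' (n : ℕ) [NeZero n] (hn : 7 ≤ n) (a : Fin n) : ffun n hn a ≠ a - 1 := by
  intro h
  have h2 : ffun n hn a + 1 = a := by rw [h]; exact sub_add_cancel a 1
  have h3 := congrArg Fin.val h2
  rw [fin_add_one_val n hn] at h3
  exact gfun_mod n hn _ a.isLt h3

lemma ffun_zero (n : ℕ) [NeZero n] (hn : 7 ≤ n) : ffun n hn ⟨0, by omega⟩ = ⟨2, by omega⟩ := by
  apply Fin.ext; show gfun n 0 = 2; simp [gfun]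

lemma ffun_two (n : ℕ) [NeZero n] (hn : 7 ≤ n) : ffun n hn ⟨2, by omega⟩ = ⟨0, by omega⟩ := by
  apply Fin.ext; show gfun n 2 = 0; simp [gfun]

lemma fin_sub0 (n : ℕ) [NeZero n] (hn : 7 ≤ n) : ((⟨0, by omega⟩ : Fin n) - 1).val = n - 1 := by
  rw [Fin.sub_def, fin_val_one n hn]
  simp only [Fin.val_mk]
  rw [Nat.add_zero, Nat.mod_eq_of_lt (by omega)]

lemma ffun_three (n : ℕ) [NeZero n] (hn : 7 ≤ n) : ffun n hn ⟨3, by omega⟩ = ⟨0, by omega⟩ - 1 := by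
  apply Fin.ext
  rw [fin_sub0 n hn]
  show gfun n 3 = n - 1
  simp [gfun]

lemma fin_sub3 (n : ℕ) [NeZero n] (hn : 7 ≤ n) : (⟨3, by omega⟩ : Fin n) - 1 = ⟨2, by omega⟩ := by
  apply sub_eq_of_eq_add
  apply Fin.ext
  rw [fin_add_one_val n hn]
  show 3 = (2 + 1) % n
  rw [Nat.mod_eq_of_lt (by omega)]

open Fin.NatCast in
lemma sigma_dichot (n : ℕ) [NeZero n] (hn : 7 ≤ n) (σ : Fin n ≃ Fin n)
    (h : ∀ a : Fin n, σ a = a ∨ σ a = a - 1) :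
    (∀ a : Fin n, σ a = a) ∨ (∀ a : Fin n, σ a = a - 1) := by
  have haddne : ∀ b : Fin n, b ≠ b + 1 := by
    intro b hb
    exact fin_one_ne_zero n hn (left_eq_add.mp hb)
  have step : ∀ a : Fin n, σ a = a → σ (a + 1) = a + 1 := by
    intro a ha
    rcases h (a + 1) with h' | h'
    · exact h'
    · exfalso
      rw [add_sub_cancel_right] at h'
      exact haddne a (σ.injective (h'.trans ha.symm)).symm
  by_cases hid : ∃ a, σ a = a
  · obtain ⟨a₀, h0⟩ := hid
    left
    have all : ∀ k : ℕ, σ (a₀ + (k : Fin n)) = a₀ + (k : Fin n) := by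
      intro k
      induction k with
      | zero => simpa using h0
      | succ k ih =>
        have hc : ((k + 1 : ℕ) : Fin n) = (k : Fin n) + 1 := by push_cast; ring
        rw [hc, ← add_assoc]
        exact step _ ih
    intro b
    have := all (b - a₀).val
    rwa [Fin.cast_val_eq_self, add_sub_cancel] at this
  · push_neg at hid
    exact Or.inr fun a => (h a).resolve_left (hid a)

/-- **Remark.**  For every `n ≥ 7` there exist a 2-regular bipartite graph `G` and a
1-regular bipartite graph `H` on a common bipartition with parts of size `n`, with
disjoint edge sets, such that no perfect matching in `G` is acceptable for `H`. -/
theorem two_regular_one_regular_no_acceptable_matching (n : ℕ) (hn : 7 ≤ n) :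
    ∃ G H : Fin n → Fin n → Prop, BipRegular n 2 G ∧ BipRegular n 1 H ∧
      (∀ a b : Fin n, ¬ (G a b ∧ H a b)) ∧
      ¬ ∃ σ : Fin n ≃ Fin n, AcceptableMatching n G H σ := by
  haveI : NeZero n := ⟨by omega⟩
  have hone := fin_one_ne_zero n hn
  have hsubne : ∀ a : Fin n, a ≠ a - 1 := by
    intro a h
    exact hone (sub_eq_self.mp h.symm)
  have haddne : ∀ b : Fin n, b ≠ b + 1 := by
    intro b h
    exact hone (left_eq_add.mp h)
  refine ⟨fun a b => b = a ∨ b = a - 1, fun a b => b = ffun n hn a, ⟨?_, ?_⟩, ⟨?_, ?_⟩, ?_, ?_⟩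
  · intro a
    have hs : {b : Fin n | b = a ∨ b = a - 1} = {a, a - 1} := by
      ext b; simp [Set.mem_insert_iff]
    rw [hs, Set.ncard_pair (hsubne a)]
  · intro b
    have hs : {a : Fin n | b = a ∨ b = a - 1} = {b, b + 1} := by
      ext a
      simp only [Set.mem_setOf_eq, Set.mem_insert_iff, Set.mem_singleton_iff]
      constructor
      · rintro (h | h)
        · exact Or.inl h.symm
        · exact Or.inr (by rw [h, sub_add_cancel])
      · rintro (h | h)
        · exact Or.inl h.symm
        · exact Or.inr (by rw [h, add_sub_cancel_right])
    rw [hs, Set.ncard_pair (haddne b)]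
  · intro a
    have hs : {b : Fin n | b = ffun n hn a} = {ffun n hn a} := by ext b; simp
    rw [hs, Set.ncard_singleton]
  · intro b
    have hs : {a : Fin n | b = ffun n hn a} = {(Equiv.ofBijective _ (ffun_bij n hn)).symm b} := by
      ext a
      simp only [Set.mem_setOf_eq, Set.mem_singleton_iff]
      rw [eq_comm (b := (Equiv.ofBijective _ (ffun_bij n hn)).symm b), Equiv.symm_apply_eq]
      exact Iff.rfl
    rw [hs, Set.ncard_singleton]
  · rintro a b ⟨hG, hH⟩
    rcases hG with h | h
    · exact ffun_ne n hn a (hH ▸ h)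
    · exact ffun_ne' n hn a (hH ▸ h)
  · rintro ⟨σ, hσ1, hσ2⟩
    rcases sigma_dichot n hn σ hσ1 with hall | hall
    · refine hσ2 ⟨0, by omega⟩ ⟨2, by omega⟩ (fun h => ?_) ⟨?_, ?_⟩
      · rw [Fin.ext_iff] at h; simp at h
      · rw [hall]; exact (ffun_zero n hn).symm
      · rw [hall]; exact (ffun_two n hn).symm
    · refine hσ2 ⟨0, by omega⟩ ⟨3, by omega⟩ (fun h => ?_) ⟨?_, ?_⟩
      · rw [Fin.ext_iff] at h; simp at h
      · rw [hall, fin_sub3 n hn]; exact (ffun_zero n hn).symm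
      · rw [hall]; exact (ffun_three n hn).symm
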